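/- Let (S, ≤) be a semilinear order with betweenness B, and suppose that for any three distinct points, if some point x satisfies B(a,x,b) and B(b,x,c), then ¬B(a,b,c). Conclude: if a function f : S → S preserves B and for all distinct a,b there exists c with B(a,b,c), then f also preserves ¬B on triples of distinct points, i.e., f is an embedding with respect to B on distinct triples, provided additionally the median property holds (for ¬B(a,b,c) with a,b,c pairwise distinct there is x with B(a,x,b) ∧ B(b,x,c)). -/
import Mathlib


variable {S : Type*} [PartialOrder S]

/-- Incomparability in a partial order. -/
def Incomp (x y : S) : Prop := ¬ x ≤ y ∧ ¬ y ≤ x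

/-- Betweenness relation of a semilinear order. -/
def TreeBtw (a b c : S) : Prop :=
  b ≠ a ∧ b ≠ c ∧
    ((a < b ∧ b ≤ c) ∨ (c < b ∧ b ≤ a) ∨
      (Incomp a c ∧ a < b ∧ c < b ∧ ∀ d, a < d → c < d → b ≤ d))

/-- A function preserving betweenness also preserves its negation
on triples of distinct points, given the median property. -/
theorem preserves_not_btw
    (h1 : ∀ a b c : S, a ≠ b → b ≠ c → c ≠ a →
      (∃ x, TreeBtw a x b ∧ TreeBtw b x c) → ¬ TreeBtw a b c)
    (hmed : ∀ a b c : S, a ≠ b → b ≠ c → c ≠ a →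
      ¬ TreeBtw a b c → ∃ x, TreeBtw a x b ∧ TreeBtw b x c)
    (f : S → S)
    (hf : ∀ x y z : S, TreeBtw x y z → TreeBtw (f x) (f y) (f z))
    (hext : ∀ a b : S, a ≠ b → ∃ c, TreeBtw a b c) :
    ∀ a b c : S, a ≠ b → b ≠ c → c ≠ a → ¬ TreeBtw a b c →
      ¬ TreeBtw (f a) (f b) (f c) := by
  intro a b c hab hbc hca hnb
  -- f is injective on distinct pairs
  have hinj : ∀ x y : S, x ≠ y → f x ≠ f y := by
    intro x y hxy
    obtain ⟨z, hz⟩ := hext x y hxy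
    have := hf x y z hz
    exact fun h => this.1 h.symm
  obtain ⟨x, hx1, hx2⟩ := hmed a b c hab hbc hca hnb
  exact h1 (f a) (f b) (f c) (hinj a b hab) (hinj b c hbc) (hinj c a hca)
    ⟨f x, hf a x b hx1, hf b x c hx2⟩
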